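/- For n ≥ 2 and real q ≥ 3, the polynomial ∑_{d|n} (d−n)·q^d·μ(n/d) is bounded below by n/(q−1) + n, and in particular is positive. -/

import Mathlib

open Finset

theorem stmt_4 (n : ℕ) (hn : 2 ≤ n) (q : ℝ) (hq : 3 ≤ q) :
    (n : ℝ) / (q - 1) + n ≤
        ∑ d ∈ n.divisors, ((d : ℝ) - n) * q ^ d * ((ArithmeticFunction.moebius (n / d) : ℤ) : ℝ) ∧
      0 < ∑ d ∈ n.divisors,
        ((d : ℝ) - n) * q ^ d * ((ArithmeticFunction.moebius (n / d) : ℤ) : ℝ) := by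
  have hn0 : n ≠ 0 := by omega
  have hn1 : n ≠ 1 := by omega
  set f : ℕ → ℝ := fun d => ((d : ℝ) - n) * q ^ d * ((ArithmeticFunction.moebius (n / d) : ℤ) : ℝ)
    with hf
  set p := n.minFac with hpdef
  have hp : p.Prime := Nat.minFac_prime hn1
  have hpdvd : p ∣ n := Nat.minFac_dvd n
  set d0 := n / p with hd0def
  have hd0dvd : d0 ∣ n := Nat.div_dvd_of_dvd hpdvd
  have hd0mul : d0 * p = n := Nat.div_mul_cancel hpdvd
  have hd0pos : 0 < d0 := Nat.div_pos (Nat.minFac_le (by omega)) hp.pos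
  have hd0lt : d0 < n := Nat.div_lt_self (by omega) hp.one_lt
  have h2d0 : 2 * d0 ≤ n := by
    calc 2 * d0 ≤ p * d0 := Nat.mul_le_mul_right _ hp.two_le
    _ = n := by rw [Nat.mul_comm]; exact hd0mul
  have hnd0 : n / d0 = p := Nat.div_div_self hpdvd hn0
  have hq1 : (0:ℝ) < q - 1 := by linarith
  have hqpos : (0:ℝ) < q := by linarith
  -- value at d0
  have hfd0 : f d0 = ((n : ℝ) - d0) * q ^ d0 := by
    simp only [hf, hnd0, ArithmeticFunction.moebius_apply_prime hp]
    push_cast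
    ring
  -- membership facts
  have hmem_n : n ∈ n.divisors := Nat.mem_divisors_self n hn0
  have hmem_d0 : d0 ∈ (n.divisors.erase n) := by
    refine Finset.mem_erase.mpr ⟨by omega, Nat.mem_divisors.mpr ⟨hd0dvd, hn0⟩⟩
  set s := (n.divisors.erase n).erase d0 with hs
  -- decompose the sum
  have hsplit : ∑ d ∈ n.divisors, f d = ((n:ℝ) - d0) * q ^ d0 + ∑ d ∈ s, f d := by
    rw [← Finset.add_sum_erase _ f hmem_n, ← Finset.add_sum_erase _ f hmem_d0, hfd0]
    simp [hf, hs]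
  -- every d in s lies in Ico 1 d0
  have hsub : s ⊆ Finset.Ico 1 d0 := by
    intro d hd
    rw [hs] at hd
    obtain ⟨hdne0, hd'⟩ := Finset.mem_erase.mp hd
    obtain ⟨hdnen, hddvd'⟩ := Finset.mem_erase.mp hd'
    have hddvd : d ∣ n := (Nat.mem_divisors.mp hddvd').1
    have hdpos : 0 < d := Nat.pos_of_dvd_of_pos hddvd (by omega)
    have hle : d ≤ d0 := by
      have hnd_dvd : n / d ∣ n := Nat.div_dvd_of_dvd hddvd
      have hnd_ne1 : n / d ≠ 1 := by
        intro h
        have := Nat.eq_of_dvd_of_div_eq_one hddvd h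
        omega
      have hndpos : 0 < n / d := Nat.div_pos (Nat.le_of_dvd (by omega) hddvd) hdpos
      have hpd : p ≤ n / d := Nat.minFac_le_of_dvd (by omega) hnd_dvd
      rw [hd0def, Nat.le_div_iff_mul_le hp.pos]
      calc d * p ≤ d * (n / d) := Nat.mul_le_mul_left _ hpd
      _ = n := Nat.mul_div_cancel' hddvd
    refine Finset.mem_Ico.mpr ⟨hdpos, by omega⟩
  -- pointwise lower bound on f
  have hpt : ∀ d ∈ s, -((n:ℝ) * q ^ d) ≤ f d := by
    intro d hd
    have hdlt : d < n := by
      have := Finset.mem_Ico.mp (hsub hd); omega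
    have hdn : (d:ℝ) ≤ n := by exact_mod_cast hdlt.le
    have hd0' : (0:ℝ) ≤ d := Nat.cast_nonneg d
    have hμ : |((ArithmeticFunction.moebius (n / d) : ℤ) : ℝ)| ≤ 1 := by
      rw [← Int.cast_abs]
      exact_mod_cast ArithmeticFunction.abs_moebius_le_one
    have habs : |f d| ≤ (n:ℝ) * q ^ d := by
      have h1 : |(d:ℝ) - n| ≤ (n:ℝ) := by
        rw [abs_sub_comm, abs_of_nonneg (by linarith)]
        linarith
      calc |f d| = |(d:ℝ) - n| * q ^ d * |((ArithmeticFunction.moebius (n / d) : ℤ) : ℝ)| := by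
            rw [hf]
            rw [abs_mul, abs_mul, abs_of_nonneg (pow_nonneg hqpos.le d)]
      _ ≤ (n:ℝ) * q ^ d * 1 := by
            gcongr
      _ = (n:ℝ) * q ^ d := by ring
    calc -((n:ℝ) * q ^ d) ≤ -|f d| := by linarith
    _ ≤ f d := neg_abs_le _
  -- bound the tail
  have htail : -((n:ℝ) * ((q ^ d0 - q) / (q - 1))) ≤ ∑ d ∈ s, f d := by
    have h1 : ∑ d ∈ s, -((n:ℝ) * q ^ d) ≤ ∑ d ∈ s, f d := Finset.sum_le_sum hpt
    have h2 : ∑ d ∈ s, (n:ℝ) * q ^ d ≤ ∑ d ∈ Finset.Ico 1 d0, (n:ℝ) * q ^ d := by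
      refine Finset.sum_le_sum_of_subset_of_nonneg hsub ?_
      intro i _ _
      positivity
    have h3 : ∑ d ∈ Finset.Ico 1 d0, (n:ℝ) * q ^ d = (n:ℝ) * ((q ^ d0 - q) / (q - 1)) := by
      rw [← Finset.mul_sum, geom_sum_Ico (by linarith : q ≠ 1) hd0pos, pow_one]
    have h4 : ∑ d ∈ s, -((n:ℝ) * q ^ d) = -∑ d ∈ s, (n:ℝ) * q ^ d := by simp
    rw [h4] at h1
    linarith
  -- key arithmetic inequality
  have hA : (3:ℝ) ≤ q ^ d0 := by
    calc (3:ℝ) ≤ q := hq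
    _ = q ^ 1 := (pow_one q).symm
    _ ≤ q ^ d0 := pow_le_pow_right₀ (by linarith) hd0pos
  have hd0n : 2 * (d0:ℝ) ≤ n := by exact_mod_cast h2d0
  have hc : (0:ℝ) ≤ ((n:ℝ) - d0) * (q - 1) - n := by nlinarith
  have hkey : (n:ℝ) / (q - 1) + n ≤ ((n:ℝ) - d0) * q ^ d0 - n * ((q ^ d0 - q) / (q - 1)) := by
    rw [← sub_nonneg]
    have heq : ((n:ℝ) - d0) * q ^ d0 - n * ((q ^ d0 - q) / (q - 1)) - ((n:ℝ) / (q - 1) + n)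
        = (q ^ d0 * (((n:ℝ) - d0) * (q - 1) - n)) / (q - 1) := by
      field_simp
      ring
    rw [heq]
    exact div_nonneg (mul_nonneg (pow_nonneg hqpos.le d0) hc) hq1.le
  have hmain : (n : ℝ) / (q - 1) + n ≤ ∑ d ∈ n.divisors, f d := by
    rw [hsplit]
    linarith
  refine ⟨hmain, lt_of_lt_of_le ?_ hmain⟩
  have hnpos : (0:ℝ) < n := by exact_mod_cast Nat.pos_of_ne_zero hn0
  positivity
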